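/- For every natural number n and every real x, the n-th Legendre polynomial satisfies P_n(x) = 2^{-n} Σ_{k=0}^{n} C(n,k)² (x-1)^k (x+1)^{n-k}. -/

import Mathlib

open Polynomial Finset

lemma iteratedDeriv_polyEval (n : ℕ) (p : ℝ[X]) :
    iteratedDeriv n (fun x => p.eval x) = fun x => (derivative^[n] p).eval x := by
  induction n generalizing p with
  | zero => simp
  | succ m ih =>
    rw [iteratedDeriv_succ']
    have hd : (deriv fun x => p.eval x) = fun x => p.derivative.eval x := by
      funext y; exact Polynomial.deriv (p := p) (x := y)
    rw [hd, ih (derivative p)]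
    funext y
    rw [← Function.iterate_succ_apply]

/-- The `n`-th Legendre polynomial, via Rodrigues' formula
`P_n(x) = (1/(2^n n!)) dⁿ/dxⁿ (x²-1)ⁿ`. -/
noncomputable def legendreP (n : ℕ) : ℝ → ℝ := fun x =>
  (1 / (2 ^ n * (n.factorial : ℝ))) * iteratedDeriv n (fun y => (y ^ 2 - 1) ^ n) x

theorem legendre_binomial_representation (n : ℕ) (x : ℝ) :
    legendreP n x =
      (1 / 2 ^ n) *
        ∑ k ∈ Finset.range (n + 1),
          ((n.choose k : ℝ)) ^ 2 * (x - 1) ^ k * (x + 1) ^ (n - k) := by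
  unfold legendreP
  have hf : (fun y : ℝ => (y ^ 2 - 1) ^ n)
      = fun y => (((X - C 1) ^ n * (X + C 1) ^ n : ℝ[X])).eval y := by
    funext y; simp [← mul_pow]; ring_nf
  have hiter : iteratedDeriv n (fun y : ℝ => (y ^ 2 - 1) ^ n) x
      = (derivative^[n] ((X - C 1) ^ n * (X + C 1) ^ n : ℝ[X])).eval x := by
    rw [hf, iteratedDeriv_polyEval]
  rw [hiter, Polynomial.iterate_derivative_mul, eval_finset_sum]
  have key : ∀ k ∈ Finset.range (n + 1),
      ((n.choose k • (derivative^[n - k] ((X - C 1 : ℝ[X]) ^ n) *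
        derivative^[k] ((X + C 1 : ℝ[X]) ^ n)))).eval x
      = (n.factorial : ℝ) * (((n.choose k : ℝ)) ^ 2 * (x - 1) ^ k * (x + 1) ^ (n - k)) := by
    intro k hk
    rw [Finset.mem_range] at hk
    have hk' : k ≤ n := Nat.lt_succ_iff.mp hk
    rw [Polynomial.iterate_derivative_X_sub_pow, Polynomial.iterate_derivative_X_add_pow,
      Nat.sub_sub_self hk']
    have hnat : n.choose k * (n.descFactorial (n - k) * n.descFactorial k)
        = n.factorial * n.choose k ^ 2 := by
      rw [Nat.descFactorial_eq_factorial_mul_choose n (n - k),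
        Nat.descFactorial_eq_factorial_mul_choose n k,
        Nat.choose_symm hk']
      have e3 := Nat.choose_mul_factorial_mul_factorial hk'
      calc n.choose k * ((n - k).factorial * n.choose k * (k.factorial * n.choose k))
          = (n.choose k * k.factorial * (n - k).factorial) * n.choose k ^ 2 := by ring
        _ = n.factorial * n.choose k ^ 2 := by rw [← e3]
    have hcast : (n.choose k : ℝ) * ((n.descFactorial (n - k) : ℝ) * (n.descFactorial k : ℝ))
        = (n.factorial : ℝ) * (n.choose k : ℝ) ^ 2 := by exact_mod_cast hnat
    simp only [eval_smul, smul_eq_mul, eval_mul, eval_pow, eval_sub, eval_add, eval_X,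
      eval_one, eval_C, nsmul_eq_mul, eval_natCast]
    linear_combination ((x - 1) ^ k * (x + 1) ^ (n - k)) * hcast
  rw [Finset.sum_congr rfl key, ← Finset.mul_sum]
  have hn : (n.factorial : ℝ) ≠ 0 := Nat.cast_ne_zero.mpr n.factorial_ne_zero
  field_simp
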